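/- If x and x′ are both solutions of the n-state problem, then they agree in at least one component: there exists an index i₀ with x_{i₀} = x′_{i₀}. -/

import Mathlib

open ComplexOrder

open Matrix

lemma aux_diag_const_conj {n : ℕ} {U : Matrix (Fin n) (Fin n) ℂ} (hUU : U * star U = 1) (c : ℂ) :
    Matrix.diagonal (fun _ : Fin n => c) = U * Matrix.diagonal (fun _ : Fin n => c) * star U := by
  have h : Matrix.diagonal (fun _ : Fin n => c) = c • (1 : Matrix (Fin n) (Fin n) ℂ) := by
    ext i j
    simp [Matrix.diagonal_apply, Matrix.one_apply]
  rw [h, Matrix.mul_smul, mul_one, Matrix.smul_mul, hUU]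

/-- A positive definite matrix dominates `ε • 1` for `ε` the least eigenvalue. -/
lemma aux_sub_smul_one_posSemidef {n : ℕ} (hn : 1 ≤ n) {A : Matrix (Fin n) (Fin n) ℂ}
    (hA : A.PosDef) :
    ∃ ε : ℝ, 0 < ε ∧ (A - Matrix.diagonal (fun _ => (ε : ℂ))).PosSemidef := by
  have : Nonempty (Fin n) := ⟨⟨0, hn⟩⟩
  have hH := hA.isHermitian
  set ε := Finset.univ.inf' Finset.univ_nonempty hH.eigenvalues with hε
  refine ⟨ε, ?_, ?_⟩
  · obtain ⟨i, -, hi⟩ := Finset.exists_mem_eq_inf' Finset.univ_nonempty hH.eigenvalues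
    rw [hε, hi]; exact hA.eigenvalues_pos i
  · have hU := hH.spectral_theorem
    set U : Matrix (Fin n) (Fin n) ℂ := (hH.eigenvectorUnitary : Matrix (Fin n) (Fin n) ℂ) with hUdef
    have hUU : U * star U = 1 := Matrix.mem_unitaryGroup_iff.mp hH.eigenvectorUnitary.2
    have key : A - Matrix.diagonal (fun _ => (ε : ℂ)) =
        U * Matrix.diagonal (fun i => ((hH.eigenvalues i - ε : ℝ) : ℂ)) * star U := by
      nth_rewrite 1 [hU, Unitary.conjStarAlgAut_apply, aux_diag_const_conj hUU (ε : ℂ)]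
      rw [← Matrix.sub_mul, ← Matrix.mul_sub, Matrix.diagonal_sub]
      congr 1
      congr 2
      ext i
      push_cast
      simp
    rw [key]
    have hdiag : (Matrix.diagonal (fun i => ((hH.eigenvalues i - ε : ℝ) : ℂ))).PosSemidef := by
      rw [Matrix.posSemidef_diagonal_iff]
      intro i
      rw [Complex.zero_le_real]
      simp only [sub_nonneg, hε]
      exact Finset.inf'_le _ (Finset.mem_univ i)
    have := hdiag.mul_mul_conjTranspose_same U
    exact Matrix.star_eq_conjTranspose U ▸ this

/-- At an optimum of the n-state problem, the constraint matrix is not positive definite. -/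
lemma aux_not_posDef_of_opt {n : ℕ} (hn : 1 ≤ n)
    (N : Matrix (Fin n) (Fin n) ℂ)
    (η : Fin n → ℝ) (hη : ∀ i, 0 < η i)
    (y : Fin n → ℝ) (hy0 : ∀ i, 0 ≤ y i)
    (hyOpt : ∀ z : Fin n → ℝ, (∀ i, 0 ≤ z i) →
      (N - Matrix.diagonal (fun i => (z i : ℂ))).PosSemidef →
      ∑ i, η i * z i ≤ ∑ i, η i * y i) :
    ¬ (N - Matrix.diagonal (fun i => (y i : ℂ))).PosDef := by
  intro hPD
  obtain ⟨ε, hε, hPSD⟩ := aux_sub_smul_one_posSemidef hn hPD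
  set j : Fin n := ⟨0, hn⟩
  set z : Fin n → ℝ := fun i => y i + ε * (Pi.single j 1 : Fin n → ℝ) i with hz
  have hz0 : ∀ i, 0 ≤ z i := by
    intro i
    have : (0:ℝ) ≤ (Pi.single j 1 : Fin n → ℝ) i := by
      rcases eq_or_ne i j with h | h
      · subst h; simp
      · simp [h]
    have := mul_nonneg hε.le this
    simp only [hz]
    linarith [hy0 i]
  have hzF : (N - Matrix.diagonal (fun i => (z i : ℂ))).PosSemidef := by
    have key : N - Matrix.diagonal (fun i => (z i : ℂ)) =
        (N - Matrix.diagonal (fun i => (y i : ℂ)) - Matrix.diagonal (fun _ => (ε : ℂ)))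
          + Matrix.diagonal (fun i => ((ε - ε * (Pi.single j 1 : Fin n → ℝ) i : ℝ) : ℂ)) := by
      ext i k
      rcases eq_or_ne i k with h | h
      · subst h
        simp only [Matrix.sub_apply, Matrix.add_apply, Matrix.diagonal_apply_eq, hz]
        push_cast
        ring
      · simp [Matrix.sub_apply, Matrix.add_apply, Matrix.diagonal_apply_ne _ h]
    rw [key]
    refine hPSD.add (Matrix.PosSemidef.diagonal ?_)
    intro i
    rw [Pi.zero_apply, Complex.zero_le_real, sub_nonneg]
    rcases eq_or_ne i j with h | h
    · subst h; simp
    · simp [h, hε.le]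
  have hgt : ∑ i, η i * y i < ∑ i, η i * z i := by
    have : ∑ i, η i * z i = ∑ i, η i * y i + ε * η j := by
      simp only [hz, mul_add, Finset.sum_add_distrib]
      congr 1
      rw [Finset.sum_eq_single j]
      · simp; ring
      · intro b _ hb; simp [Pi.single_apply, hb]
      · simp
    rw [this]
    nlinarith [hη j]
  exact absurd (hyOpt z hz0 hzF) (not_le.mpr hgt)

/-- If `x` and `x'` are both solutions of the `n`-state problem, then they agree
in at least one component. -/
theorem solutions_agree_in_some_component
    (n : ℕ) (hn : 1 ≤ n)
    (N : Matrix (Fin n) (Fin n) ℂ) (hN : N.PosDef) (hNdiag : ∀ i, N i i = 1)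
    (η : Fin n → ℝ) (hη : ∀ i, 0 < η i) (hηsum : ∑ i, η i = 1)
    (x x' : Fin n → ℝ)
    (hx0 : ∀ i, 0 ≤ x i) (hx'0 : ∀ i, 0 ≤ x' i)
    (hxF : (N - Matrix.diagonal (fun i => (x i : ℂ))).PosSemidef)
    (hx'F : (N - Matrix.diagonal (fun i => (x' i : ℂ))).PosSemidef)
    (hxOpt : ∀ y : Fin n → ℝ, (∀ i, 0 ≤ y i) →
      (N - Matrix.diagonal (fun i => (y i : ℂ))).PosSemidef →
      ∑ i, η i * y i ≤ ∑ i, η i * x i)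
    (hx'Opt : ∀ y : Fin n → ℝ, (∀ i, 0 ≤ y i) →
      (N - Matrix.diagonal (fun i => (y i : ℂ))).PosSemidef →
      ∑ i, η i * y i ≤ ∑ i, η i * x' i) :
    ∃ i₀, x i₀ = x' i₀ := by
  classical
  set A := N - Matrix.diagonal (fun i => (x i : ℂ)) with hA
  set B := N - Matrix.diagonal (fun i => (x' i : ℂ)) with hB
  -- the midpoint
  set y : Fin n → ℝ := fun i => (x i + x' i) / 2 with hy
  set C := N - Matrix.diagonal (fun i => (y i : ℂ)) with hC
  have hABC : A + B = (2:ℂ) • C := by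
    ext i k
    rcases eq_or_ne i k with h | h
    · subst h
      simp only [hA, hB, hC, Matrix.add_apply, Matrix.sub_apply, Matrix.smul_apply,
        Matrix.diagonal_apply_eq, hy, smul_eq_mul]
      push_cast
      ring
    · simp only [hA, hB, hC, Matrix.add_apply, Matrix.sub_apply, Matrix.smul_apply,
        Matrix.diagonal_apply_ne _ h, smul_eq_mul]
      ring
  have hy0 : ∀ i, 0 ≤ y i := fun i => by
    have := hx0 i; have := hx'0 i; simp only [hy]; linarith
  have hCPSD : C.PosSemidef := by
    refine Matrix.PosSemidef.of_dotProduct_mulVec_nonneg ?_ ?_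
    · refine hN.isHermitian.sub ?_
      exact Matrix.isHermitian_diagonal_of_self_adjoint _ <|
        funext fun i => Complex.conj_ofReal _
    · intro v
      have h1 := hxF.dotProduct_mulVec_nonneg v
      have h2 := hx'F.dotProduct_mulVec_nonneg v
      have hsum : star v ⬝ᵥ (A + B) *ᵥ v = (2:ℂ) * (star v ⬝ᵥ C *ᵥ v) := by
        rw [hABC, Matrix.smul_mulVec, dotProduct_smul, smul_eq_mul]
      rw [Matrix.add_mulVec, dotProduct_add] at hsum
      set q := star v ⬝ᵥ C *ᵥ v
      have : (0:ℂ) ≤ 2 * q := hsum ▸ add_nonneg h1 h2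
      rw [Complex.le_def] at this ⊢
      constructor
      · have := this.1; simp only [Complex.mul_re, Complex.zero_re] at this ⊢; norm_num at this ⊢
        nlinarith
      · have := this.2; simp only [Complex.mul_im, Complex.zero_im] at this ⊢; norm_num at this ⊢
        linarith
  -- p x = p x'
  have hpeq : ∑ i, η i * x i = ∑ i, η i * x' i :=
    le_antisymm (hx'Opt x hx0 hxF) (hxOpt x' hx'0 hx'F)
  have hyOpt : ∀ z : Fin n → ℝ, (∀ i, 0 ≤ z i) →
      (N - Matrix.diagonal (fun i => (z i : ℂ))).PosSemidef →
      ∑ i, η i * z i ≤ ∑ i, η i * y i := by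
    intro z hz0 hzF
    have h1 := hxOpt z hz0 hzF
    have h2 : ∑ i, η i * y i = (∑ i, η i * x i + ∑ i, η i * x' i) / 2 := by
      rw [← Finset.sum_add_distrib, Finset.sum_div]
      exact Finset.sum_congr rfl fun i _ => by simp only [hy]; ring
    rw [h2, ← hpeq]
    linarith
  have hnotPD : ¬ C.PosDef := aux_not_posDef_of_opt hn N η hη y hy0 hyOpt
  -- extract kernel vector
  have hex : ∃ v : Fin n → ℂ, v ≠ 0 ∧ star v ⬝ᵥ C *ᵥ v = 0 := by
    by_contra hcon
    push_neg at hcon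
    exact hnotPD (Matrix.PosDef.of_dotProduct_mulVec_pos hCPSD.isHermitian fun v hv =>
      lt_of_le_of_ne (hCPSD.dotProduct_mulVec_nonneg v) (Ne.symm (hcon v hv)))
  obtain ⟨v, hv, hq⟩ := hex
  have hqA : star v ⬝ᵥ A *ᵥ v = 0 := by
    have hsum : star v ⬝ᵥ A *ᵥ v + star v ⬝ᵥ B *ᵥ v = 0 := by
      rw [← dotProduct_add, ← Matrix.add_mulVec, hABC, Matrix.smul_mulVec,
        dotProduct_smul, hq, smul_zero]
    have h1 := hxF.dotProduct_mulVec_nonneg v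
    have h2 := hx'F.dotProduct_mulVec_nonneg v
    have : star v ⬝ᵥ A *ᵥ v ≤ 0 := by
      calc star v ⬝ᵥ A *ᵥ v = -(star v ⬝ᵥ B *ᵥ v) := by linear_combination hsum
        _ ≤ 0 := neg_nonpos.mpr h2
    exact le_antisymm this h1
  have hqB : star v ⬝ᵥ B *ᵥ v = 0 := by
    have hsum : star v ⬝ᵥ A *ᵥ v + star v ⬝ᵥ B *ᵥ v = 0 := by
      rw [← dotProduct_add, ← Matrix.add_mulVec, hABC, Matrix.smul_mulVec,
        dotProduct_smul, hq, smul_zero]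
    rw [hqA, zero_add] at hsum
    exact hsum
  have hAv : A *ᵥ v = 0 := (hxF.dotProduct_mulVec_zero_iff v).mp hqA
  have hBv : B *ᵥ v = 0 := (hx'F.dotProduct_mulVec_zero_iff v).mp hqB
  have hdiff : (Matrix.diagonal (fun i => ((x' i : ℂ) - x i))) *ᵥ v = 0 := by
    have : A - B = Matrix.diagonal (fun i => ((x' i : ℂ) - x i)) := by
      ext i k
      rcases eq_or_ne i k with h | h
      · subst h; simp [hA, hB, Matrix.sub_apply]
      · simp [hA, hB, Matrix.sub_apply, Matrix.diagonal_apply_ne _ h]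
    rw [← this, Matrix.sub_mulVec, hAv, hBv, sub_zero]
  obtain ⟨i₀, hi₀⟩ := Function.ne_iff.mp hv
  refine ⟨i₀, ?_⟩
  have hcomp := congrFun hdiff i₀
  rw [Matrix.mulVec_diagonal] at hcomp
  simp only [Pi.zero_apply] at hcomp hi₀
  have hsub : (x' i₀ : ℂ) - x i₀ = 0 := by
    rcases mul_eq_zero.mp hcomp with h | h
    · exact h
    · exact absurd h hi₀
  have : (x' i₀ : ℂ) = (x i₀ : ℂ) := sub_eq_zero.mp hsub
  exact_mod_cast this.symm
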